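/- For every n ≥ 4, there exists a graph G on n vertices such that both G and its complement are connected and tpc(G) = tpc(complement of G) = 3; hence the lower bound tpc(G) + tpc(complement of G) ≥ 6 is sharp. -/

import Mathlib

/-- Interleave two lists, starting with the first. -/
def List.interleave' {α : Type*} : List α → List α → List α
  | [], ys => ys
  | x :: xs, ys => x :: List.interleave' ys xs
termination_by xs ys => xs.length + ys.length

namespace SimpleGraph

variable {V : Type*} {α : Type*} {G : SimpleGraph V}

/-- The sequence of colors `cE e₀, cV v₁, cE e₁, cV v₂, …, cE e_{m-1}` of the edges and
internal vertices of a walk, in order. -/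
def Walk.totalColorSeq (cV : V → α) (cE : Sym2 V → α) {u v : V} (p : G.Walk u v) : List α :=
  (p.edges.map cE).interleave' (p.support.tail.dropLast.map cV)

/-- A walk is total-proper if in its color sequence, any two entries at distance 1 or 2
are distinct.  This says exactly that adjacent edges get distinct colors, adjacent internal
vertices get distinct colors, and every internal vertex gets a color distinct from those of
its incident edges on the walk. -/
def Walk.IsTotalProper (cV : V → α) (cE : Sym2 V → α) {u v : V} (p : G.Walk u v) : Prop :=
  ∀ i a b, (p.totalColorSeq cV cE)[i]? = some a →
    ((p.totalColorSeq cV cE)[i + 1]? = some b ∨ (p.totalColorSeq cV cE)[i + 2]? = some b) →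
    a ≠ b

/-- A total coloring (given by a vertex coloring `cV` and an edge coloring `cE`) makes `G`
total-proper connected if every two distinct vertices are joined by a total-proper path. -/
def IsTPCColoring (G : SimpleGraph V) (cV : V → α) (cE : Sym2 V → α) : Prop :=
  ∀ u v : V, u ≠ v → ∃ p : G.Walk u v, p.IsPath ∧ p.IsTotalProper cV cE

/-- The total-proper connection number: the minimum number of colors in a total coloring
making `G` total-proper connected. -/
noncomputable def tpc (G : SimpleGraph V) : ℕ :=
  sInf {k | ∃ (cV : V → Fin k) (cE : Sym2 V → Fin k), G.IsTPCColoring cV cE}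

end SimpleGraph



theorem List.interleave'_nil {α : Type*} (ys : List α) : List.interleave' [] ys = ys := by
  simp [List.interleave']

theorem List.interleave'_cons {α : Type*} (x : α) (xs ys : List α) :
    List.interleave' (x :: xs) ys = x :: List.interleave' ys xs := by
  simp [List.interleave']

theorem List.length_interleave' {α : Type*} : ∀ (xs ys : List α),
    (xs.interleave' ys).length = xs.length + ys.length
  | [], ys => by simp [List.interleave']
  | x :: xs, ys => by
    rw [List.interleave'_cons, List.length_cons, List.length_interleave' ys xs]
    simp; omega
termination_by xs ys => xs.length + ys.length

/-- central properness criterion for explicit lists -/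
theorem properAux {α : Type*} (l : List α)
    (h1 : ∀ i (h : i + 1 < l.length), l[i]'(by omega) ≠ l[i+1])
    (h2 : ∀ i (h : i + 2 < l.length), l[i]'(by omega) ≠ l[i+2]) :
    ∀ i a b, l[i]? = some a → (l[i + 1]? = some b ∨ l[i + 2]? = some b) → a ≠ b := by
  intro i a b ha hb
  rw [List.getElem?_eq_some_iff] at ha
  obtain ⟨hi, ha⟩ := ha
  rcases hb with hb | hb <;> rw [List.getElem?_eq_some_iff] at hb <;> obtain ⟨hj, hb⟩ := hb
  · subst ha hb; exact h1 i hj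
  · subst ha hb; exact h2 i hj

namespace SimpleGraph

variable {V : Type*} {α : Type*} {G : SimpleGraph V}

theorem totalColorSeq_cons_nil (cV : V → α) (cE : Sym2 V → α) {u v : V} (h : G.Adj u v) :
    (Walk.cons h Walk.nil).totalColorSeq cV cE = [cE s(u, v)] := by
  simp [Walk.totalColorSeq, List.interleave']

theorem totalColorSeq_cons_cons (cV : V → α) (cE : Sym2 V → α) {u x y v : V}
    (h : G.Adj u x) (h' : G.Adj x y) (p : G.Walk y v) :
    (Walk.cons h (Walk.cons h' p)).totalColorSeq cV cE =
      cE s(u, x) :: cV x :: (Walk.cons h' p).totalColorSeq cV cE := by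
  simp only [Walk.totalColorSeq, Walk.edges_cons, Walk.support_cons, List.map_cons,
    List.tail_cons]
  rw [List.interleave'_cons]
  congr 1
  rw [List.dropLast_cons_of_ne_nil (Walk.support_ne_nil p)]
  simp only [List.map_cons, List.interleave'_cons]

theorem singleton_isTotalProper (cV : V → α) (cE : Sym2 V → α) {u v : V} (h : G.Adj u v) :
    (Walk.cons h Walk.nil).IsTotalProper cV cE := by
  rw [Walk.IsTotalProper, totalColorSeq_cons_nil]
  apply properAux <;> intro i hi <;> simp at hi

theorem totalColorSeq_copy (cV : V → α) (cE : Sym2 V → α) {u v u' v' : V}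
    (p : G.Walk u v) (hu : u = u') (hv : v = v') :
    (p.copy hu hv).totalColorSeq cV cE = p.totalColorSeq cV cE := by
  subst hu hv; rfl

theorem totalColorSeq_cons_of_nil (cV : V → α) (cE : Sym2 V → α) {u x v : V}
    (h : G.Adj u x) (p : G.Walk x v) (hp : p.Nil) :
    (Walk.cons h p).totalColorSeq cV cE = [cE s(u, x)] := 
  match p, hp with
  | Walk.nil, _ => totalColorSeq_cons_nil cV cE h

theorem totalColorSeq_cons_of_not_nil (cV : V → α) (cE : Sym2 V → α) {u x v : V}
    (h : G.Adj u x) (p : G.Walk x v) (hp : ¬ p.Nil) :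
    (Walk.cons h p).totalColorSeq cV cE = cE s(u, x) :: cV x :: p.totalColorSeq cV cE := by
  obtain ⟨y, h', q, rfl⟩ := Walk.not_nil_iff.mp hp
  exact totalColorSeq_cons_cons cV cE h h' q

theorem totalColorSeq_nil (cV : V → α) (cE : Sym2 V → α) {u : V} :
    (Walk.nil : G.Walk u u).totalColorSeq cV cE = [] := by
  simp [Walk.totalColorSeq, List.interleave']

end SimpleGraph


open SimpleGraph in
/-- The path graph on `Fin n`. -/
def pathG (n : ℕ) : SimpleGraph (Fin n) where
  Adj u v := (u : ℕ) + 1 = v ∨ (v : ℕ) + 1 = u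
  symm := by constructor; intro u v h; tauto
  loopless := by constructor; intro u h; rcases h with h | h <;> omega

theorem pathG_adj {n : ℕ} {u v : Fin n} :
    (pathG n).Adj u v ↔ (u : ℕ) + 1 = v ∨ (v : ℕ) + 1 = u := Iff.rfl

theorem pathG_compl_adj {n : ℕ} {u v : Fin n} :
    (pathG n)ᶜ.Adj u v ↔ (u : ℕ) ≠ v ∧ ¬((u : ℕ) + 1 = v ∨ (v : ℕ) + 1 = u) := by
  rw [SimpleGraph.compl_adj]
  constructor
  · rintro ⟨h1, h2⟩; exact ⟨fun hh => h1 (Fin.ext hh), h2⟩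
  · rintro ⟨h1, h2⟩; exact ⟨fun hh => h1 (congrArg Fin.val hh), h2⟩

open SimpleGraph in
/-- Monotone walk in the path graph from `i` to `i + d`. -/
def upWalk (n : ℕ) : ∀ (d i : ℕ) (hi : i < n) (h : i + d < n),
    (pathG n).Walk ⟨i, hi⟩ ⟨i + d, h⟩
  | 0, i, hi, h => Walk.nil
  | d + 1, i, hi, h =>
    Walk.cons (show (pathG n).Adj ⟨i, hi⟩ ⟨i + 1, by omega⟩ from Or.inl rfl)
      ((upWalk n d (i + 1) (by omega) (by omega)).copy rfl (by ext; simp; omega))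

open SimpleGraph in
theorem upWalk_support {n : ℕ} : ∀ (d i : ℕ) (hi : i < n) (h : i + d < n),
    ∀ x ∈ (upWalk n d i hi h).support, i ≤ (x : ℕ) := by
  intro d
  induction d with
  | zero => intro i hi h x hx; simp [upWalk] at hx; simp [hx]
  | succ d ih =>
    intro i hi h x hx
    rw [upWalk] at hx
    simp only [Walk.support_cons, Walk.support_copy, List.mem_cons] at hx
    rcases hx with rfl | hx
    · rfl
    · have := ih (i + 1) (by omega) (by omega) x hx; omega

open SimpleGraph in
theorem upWalk_isPath {n : ℕ} : ∀ (d i : ℕ) (hi : i < n) (h : i + d < n),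
    (upWalk n d i hi h).IsPath := by
  intro d
  induction d with
  | zero => intro i hi h; exact Walk.IsPath.nil
  | succ d ih =>
    intro i hi h
    rw [upWalk, Walk.cons_isPath_iff]
    refine ⟨(Walk.isPath_copy _ _ _).mpr (ih (i + 1) (by omega) (by omega)), fun hx => ?_⟩
    rw [Walk.support_copy] at hx
    have := upWalk_support d (i + 1) (by omega) (by omega) _ hx
    simp at this

theorem proper_of_mod3 (l : List (Fin 3)) (c s : ℕ) (hs : s = 1 ∨ s = 2)
    (h : ∀ (m : ℕ) (a : Fin 3), l[m]? = some a → (a : ℕ) = (c + s * m) % 3) :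
    ∀ i a b, l[i]? = some a → (l[i + 1]? = some b ∨ l[i + 2]? = some b) → a ≠ b := by
  intro i a b ha hb hab
  subst hab
  have h1 := h i a ha
  rcases hs with rfl | rfl <;> rcases hb with hb | hb <;> have h2 := h _ a hb <;> omega

def cV1 (n : ℕ) : Fin n → Fin 3 := fun j => ⟨2 * (j : ℕ) % 3, by omega⟩

def cE1 (n : ℕ) : Sym2 (Fin n) → Fin 3 :=
  Sym2.lift ⟨fun a b => ⟨((a : ℕ) + b) % 3, by omega⟩,
    fun a b => Fin.ext (by simp [Nat.add_comm])⟩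

theorem cE1_mk {n : ℕ} (a b : Fin n) : (cE1 n s(a, b) : ℕ) = ((a : ℕ) + b) % 3 := rfl

open SimpleGraph in
theorem upWalk_not_nil {n d i : ℕ} (hi : i < n) (h : i + (d + 1) < n) :
    ¬ (upWalk n (d + 1) i hi h).Nil := by
  rw [upWalk]; simp

open SimpleGraph in
theorem upWalk_seq {n : ℕ} : ∀ (d i : ℕ) (hi : i < n) (h : i + d < n) (m : ℕ) (a : Fin 3),
    ((upWalk n d i hi h).totalColorSeq (cV1 n) (cE1 n))[m]? = some a →
    (a : ℕ) = (2 * i + 1 + m) % 3 := by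
  intro d
  induction d with
  | zero =>
    intro i hi h m a ha
    rw [upWalk, totalColorSeq_nil] at ha
    simp at ha
  | succ d ih =>
    intro i hi h m a ha
    rw [upWalk] at ha
    rcases Nat.eq_zero_or_pos d with rfl | hd
    · rw [totalColorSeq_cons_of_nil _ _ _ _ (by rw [Walk.nil_copy]; rw [upWalk]; exact Walk.Nil.nil)] at ha
      rcases m with _ | m
      · simp at ha
        have : (a : ℕ) = (i + (i + 1)) % 3 := by rw [← ha]; rfl
        omega
      · simp at ha
    · obtain ⟨d, rfl⟩ := Nat.exists_eq_succ_of_ne_zero (by omega : d ≠ 0)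
      rw [totalColorSeq_cons_of_not_nil _ _ _ _
        (by rw [Walk.nil_copy]; exact upWalk_not_nil _ _)] at ha
      rcases m with _ | _ | m
      · simp at ha
        have : (a : ℕ) = (i + (i + 1)) % 3 := by rw [← ha]; rfl
        omega
      · simp at ha
        have : (a : ℕ) = 2 * (i + 1) % 3 := by rw [← ha]; rfl
        omega
      · simp only [List.getElem?_cons_succ] at ha
        rw [totalColorSeq_copy] at ha
        have := ih (i + 1) (by omega) (by omega) m a ha
        omega

open SimpleGraph in
/-- Monotone walk in the path graph from `i + d` down to `i`. -/
def downWalk (n : ℕ) : ∀ (d i : ℕ) (hi : i < n) (h : i + d < n),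
    (pathG n).Walk ⟨i + d, h⟩ ⟨i, hi⟩
  | 0, i, hi, h => Walk.nil
  | d + 1, i, hi, h =>
    Walk.cons (show (pathG n).Adj ⟨i + (d + 1), h⟩ ⟨i + d, by omega⟩ from Or.inr rfl)
      (downWalk n d i hi (by omega))

open SimpleGraph in
theorem downWalk_support {n : ℕ} : ∀ (d i : ℕ) (hi : i < n) (h : i + d < n),
    ∀ x ∈ (downWalk n d i hi h).support, (x : ℕ) ≤ i + d := by
  intro d
  induction d with
  | zero => intro i hi h x hx; simp [downWalk] at hx; simp [hx]
  | succ d ih =>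
    intro i hi h x hx
    rw [downWalk] at hx
    simp only [Walk.support_cons, List.mem_cons] at hx
    rcases hx with rfl | hx
    · simp
    · have := ih i hi (by omega) x hx; omega

open SimpleGraph in
theorem downWalk_isPath {n : ℕ} : ∀ (d i : ℕ) (hi : i < n) (h : i + d < n),
    (downWalk n d i hi h).IsPath := by
  intro d
  induction d with
  | zero => intro i hi h; exact Walk.IsPath.nil
  | succ d ih =>
    intro i hi h
    rw [downWalk, Walk.cons_isPath_iff]
    refine ⟨ih i hi (by omega), fun hx => ?_⟩
    have := downWalk_support d i hi (by omega) _ hx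
    simp at this

open SimpleGraph in
theorem downWalk_not_nil {n d i : ℕ} (hi : i < n) (h : i + (d + 1) < n) :
    ¬ (downWalk n (d + 1) i hi h).Nil := by
  rw [downWalk]; simp

open SimpleGraph in
theorem downWalk_seq {n : ℕ} : ∀ (d i : ℕ) (hi : i < n) (h : i + d < n) (m : ℕ) (a : Fin 3),
    ((downWalk n d i hi h).totalColorSeq (cV1 n) (cE1 n))[m]? = some a →
    (a : ℕ) = (2 * (i + d) + 2 + 2 * m) % 3 := by
  intro d
  induction d with
  | zero =>
    intro i hi h m a ha
    rw [downWalk, totalColorSeq_nil] at ha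
    simp at ha
  | succ d ih =>
    intro i hi h m a ha
    rw [downWalk] at ha
    rcases Nat.eq_zero_or_pos d with rfl | hd
    · rw [totalColorSeq_cons_of_nil _ _ _ _ (by rw [downWalk]; exact Walk.Nil.nil)] at ha
      rcases m with _ | m
      · simp at ha
        have : (a : ℕ) = ((i + 1) + (i + 0)) % 3 := by rw [← ha]; rfl
        omega
      · simp at ha
    · obtain ⟨d, rfl⟩ := Nat.exists_eq_succ_of_ne_zero (by omega : d ≠ 0)
      rw [totalColorSeq_cons_of_not_nil _ _ _ _ (downWalk_not_nil _ _)] at ha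
      rcases m with _ | _ | m
      · simp at ha
        have : (a : ℕ) = ((i + (d + 1 + 1)) + (i + (d + 1))) % 3 := by rw [← ha]; rfl
        omega
      · simp at ha
        have : (a : ℕ) = 2 * (i + (d + 1)) % 3 := by rw [← ha]; rfl
        omega
      · simp only [List.getElem?_cons_succ] at ha
        have := ih i hi (by omega) m a ha
        omega

open SimpleGraph in
theorem pathG_isTPC (n : ℕ) : (pathG n).IsTPCColoring (cV1 n) (cE1 n) := by
  intro u v huv
  rcases Nat.lt_or_ge (u : ℕ) (v : ℕ) with hlt | hge
  · obtain ⟨d, hd⟩ : ∃ d, (u : ℕ) + d = (v : ℕ) := ⟨(v : ℕ) - u, by omega⟩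
    refine ⟨(upWalk n d u u.isLt (by omega)).copy (Fin.eta u u.isLt) (Fin.ext hd), ?_, ?_⟩
    · rw [Walk.isPath_copy]; exact upWalk_isPath d u u.isLt _
    · rw [Walk.IsTotalProper, totalColorSeq_copy]
      refine proper_of_mod3 _ (2 * (u : ℕ) + 1) 1 (Or.inl rfl) ?_
      intro m b hb
      have := upWalk_seq d u u.isLt (by omega) m b hb
      omega
  · have hlt : (v : ℕ) < (u : ℕ) := by
      rcases Nat.lt_or_ge (v : ℕ) (u : ℕ) with h | h
      · exact h
      · exact absurd (Fin.ext (by omega)) huv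
    obtain ⟨d, hd⟩ : ∃ d, (v : ℕ) + d = (u : ℕ) := ⟨(u : ℕ) - v, by omega⟩
    refine ⟨(downWalk n d v v.isLt (by omega : (v:ℕ) + d < n)).copy (Fin.ext hd) (Fin.eta v v.isLt),
      ?_, ?_⟩
    · rw [Walk.isPath_copy]; exact downWalk_isPath d v v.isLt _
    · rw [Walk.IsTotalProper, totalColorSeq_copy]
      refine proper_of_mod3 _ (2 * ((v : ℕ) + d) + 2) 2 (Or.inr rfl) ?_
      intro m b hb
      have := downWalk_seq d v v.isLt (by omega) m b hb
      omega

open SimpleGraph in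
theorem connected_of_isTPC {n : ℕ} (hn : 0 < n) (G : SimpleGraph (Fin n))
    {cV : Fin n → Fin 3} {cE : Sym2 (Fin n) → Fin 3} (h : G.IsTPCColoring cV cE) :
    G.Connected := by
  have : Nonempty (Fin n) := ⟨⟨0, hn⟩⟩
  rw [SimpleGraph.connected_iff]
  refine ⟨fun u v => ?_, inferInstance⟩
  by_cases huv : u = v
  · subst huv; exact SimpleGraph.Reachable.refl u
  · obtain ⟨p, -, -⟩ := h u v huv
    exact ⟨p⟩

open SimpleGraph in
theorem tpc_eq_three {n : ℕ} (G : SimpleGraph (Fin n))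
    {cV : Fin n → Fin 3} {cE : Sym2 (Fin n) → Fin 3} (hcol : G.IsTPCColoring cV cE)
    (u v : Fin n) (hne : u ≠ v) (hna : ¬ G.Adj u v) : G.tpc = 3 := by
  have hmem : 3 ∈ {k | ∃ (cV : Fin n → Fin k) (cE : Sym2 (Fin n) → Fin k),
      G.IsTPCColoring cV cE} := ⟨cV, cE, hcol⟩
  have hlower : ∀ k ∈ {k | ∃ (cV : Fin n → Fin k) (cE : Sym2 (Fin n) → Fin k),
      G.IsTPCColoring cV cE}, 3 ≤ k := by
    rintro k ⟨cV', cE', hc⟩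
    obtain ⟨p, hp, hprop⟩ := hc u v hne
    have hlen2 : 2 ≤ p.length := by
      rcases Nat.lt_or_ge p.length 2 with h | h
      · interval_cases hl : p.length
        · exact absurd (Walk.eq_of_length_eq_zero hl) hne
        · exact absurd (Walk.adj_of_length_eq_one hl) hna
      · exact h
    have hlen : 3 ≤ (p.totalColorSeq cV' cE').length := by
      rw [Walk.totalColorSeq, List.length_interleave']
      simp only [List.length_map, Walk.length_edges, List.length_dropLast, List.length_tail,
        Walk.length_support]
      omega
    have h01 : (p.totalColorSeq cV' cE')[0]'(by omega) ≠ (p.totalColorSeq cV' cE')[1]'(by omega) :=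
      hprop 0 _ _ (List.getElem?_eq_getElem (by omega))
        (Or.inl (List.getElem?_eq_getElem (by omega)))
    have h02 : (p.totalColorSeq cV' cE')[0]'(by omega) ≠ (p.totalColorSeq cV' cE')[2]'(by omega) :=
      hprop 0 _ _ (List.getElem?_eq_getElem (by omega))
        (Or.inr (List.getElem?_eq_getElem (by omega)))
    have h12 : (p.totalColorSeq cV' cE')[1]'(by omega) ≠ (p.totalColorSeq cV' cE')[2]'(by omega) :=
      hprop 1 _ _ (List.getElem?_eq_getElem (by omega))
        (Or.inl (List.getElem?_eq_getElem (by omega)))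
    have hcard : ({(p.totalColorSeq cV' cE')[0]'(by omega), (p.totalColorSeq cV' cE')[1]'(by omega), (p.totalColorSeq cV' cE')[2]'(by omega)} : Finset (Fin k)).card = 3 := by
      rw [Finset.card_insert_of_notMem (by simp [h01, h02]),
        Finset.card_insert_of_notMem (by simp [h12]), Finset.card_singleton]
    calc 3 = ({(p.totalColorSeq cV' cE')[0]'(by omega), (p.totalColorSeq cV' cE')[1]'(by omega), (p.totalColorSeq cV' cE')[2]'(by omega)} : Finset (Fin k)).card :=
          hcard.symm
      _ ≤ Fintype.card (Fin k) := Finset.card_le_univ _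
      _ = k := Fintype.card_fin k
  exact le_antisymm (Nat.sInf_le hmem) (le_csInf ⟨3, hmem⟩ hlower)

def cV2 (n : ℕ) : Fin n → Fin 3 := fun _ => 0

def cE2 (n : ℕ) : Sym2 (Fin n) → Fin 3 :=
  Sym2.lift ⟨fun a b => if ((a : ℕ) + b) % 2 = 0 then 1 else 2,
    fun a b => by show (if ((a : ℕ) + b) % 2 = 0 then (1 : Fin 3) else 2) = _
                  rw [Nat.add_comm]⟩

open SimpleGraph in
theorem twoPath {n : ℕ} {u j v : Fin n} (h1 : (pathG n)ᶜ.Adj u j) (h2 : (pathG n)ᶜ.Adj j v)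
    (hne : u ≠ v) (hpar : ((u : ℕ) + v) % 2 = 1) :
    ∃ p : (pathG n)ᶜ.Walk u v, p.IsPath ∧ p.IsTotalProper (cV2 n) (cE2 n) := by
  refine ⟨Walk.cons h1 (Walk.cons h2 Walk.nil), ?_, ?_⟩
  · rw [Walk.cons_isPath_iff, Walk.cons_isPath_iff]
    simp [h1.ne, h2.ne, hne]
  · rw [Walk.IsTotalProper, totalColorSeq_cons_cons, totalColorSeq_cons_nil]
    have e1 : cE2 n s(u, j) = if ((u : ℕ) + j) % 2 = 0 then 1 else 2 := rfl
    have e2 : cE2 n s(j, v) = if ((j : ℕ) + v) % 2 = 0 then 1 else 2 := rfl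
    have ev : cV2 n j = 0 := rfl
    apply properAux <;> intro i hi <;>
      simp only [List.length_cons, List.length_nil] at hi <;>
      rcases i with _ | _ | i <;> try omega
    all_goals
      simp only [List.getElem_cons_succ, List.getElem_cons_zero, e1, e2, ev]
    all_goals split_ifs with hif1 hif2 <;> try split_ifs with hif2
    all_goals first | decide | (intro hcon; omega)

open SimpleGraph in
theorem compl_isTPC (n : ℕ) (hn : 5 ≤ n) : (pathG n)ᶜ.IsTPCColoring (cV2 n) (cE2 n) := by
  intro u v huv
  by_cases hadj : (pathG n)ᶜ.Adj u v
  · exact ⟨Walk.cons hadj Walk.nil, by simp [Walk.cons_isPath_iff, huv],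
      singleton_isTotalProper _ _ hadj⟩
  · rw [pathG_compl_adj] at hadj
    push_neg at hadj
    have hval : (u : ℕ) ≠ v := fun h => huv (Fin.ext h)
    have hor : (u : ℕ) + 1 = v ∨ (v : ℕ) + 1 = u := hadj hval
    obtain ⟨jv, hjlt, hju2, hjv2⟩ : ∃ jv, jv < n ∧
        (jv + 2 ≤ (u : ℕ) ∨ (u : ℕ) + 2 ≤ jv) ∧ (jv + 2 ≤ (v : ℕ) ∨ (v : ℕ) + 2 ≤ jv) := by
      refine ⟨if 2 ≤ min (u : ℕ) (v : ℕ) then 0 else min (u : ℕ) (v : ℕ) + 3, ?_, ?_, ?_⟩ <;>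
        split_ifs <;> omega
    have hju : (pathG n)ᶜ.Adj u ⟨jv, hjlt⟩ := by
      rw [pathG_compl_adj]; constructor <;> simp <;> omega
    have hjv : (pathG n)ᶜ.Adj ⟨jv, hjlt⟩ v := by
      rw [pathG_compl_adj]; constructor <;> simp <;> omega
    exact twoPath hju hjv huv (by omega)

instance pathGAdjDec (n : ℕ) : DecidableRel (pathG n).Adj :=
  fun _ _ => inferInstanceAs (Decidable (_ ∨ _))

def cV4 : Fin 4 → Fin 3 := fun x => if (x : ℕ) = 0 then 1 else 0

def cE4 : Sym2 (Fin 4) → Fin 3 :=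
  Sym2.lift ⟨fun a b =>
      if min (a : ℕ) b = 0 ∧ max (a : ℕ) b = 2 then 0
      else if min (a : ℕ) b = 0 ∧ max (a : ℕ) b = 3 then 2
      else if min (a : ℕ) b = 1 ∧ max (a : ℕ) b = 3 then 1 else 0,
    fun a b => by
      show (if min (a : ℕ) b = 0 ∧ max (a : ℕ) b = 2 then (0 : Fin 3)
        else if min (a : ℕ) b = 0 ∧ max (a : ℕ) b = 3 then 2
        else if min (a : ℕ) b = 1 ∧ max (a : ℕ) b = 3 then 1 else 0) = _
      rw [Nat.min_comm, Nat.max_comm]⟩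

open SimpleGraph in
theorem compl4_isTPC : (pathG 4)ᶜ.IsTPCColoring cV4 cE4 := by
  have e1 : ∀ (u v : Fin 4), (pathG 4)ᶜ.Adj u v →
      ∃ p : (pathG 4)ᶜ.Walk u v, p.IsPath ∧ p.IsTotalProper cV4 cE4 := by
    intro u v h
    refine ⟨Walk.cons h Walk.nil, ?_, singleton_isTotalProper _ _ h⟩
    rw [Walk.cons_isPath_iff]
    exact ⟨Walk.IsPath.nil, by simp [h.ne]⟩
  have e2 : ∀ (u x v : Fin 4), (pathG 4)ᶜ.Adj u x → (pathG 4)ᶜ.Adj x v → u ≠ v →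
      cE4 s(u, x) ≠ cV4 x → cV4 x ≠ cE4 s(x, v) → cE4 s(u, x) ≠ cE4 s(x, v) →
      ∃ p : (pathG 4)ᶜ.Walk u v, p.IsPath ∧ p.IsTotalProper cV4 cE4 := by
    intro u x v h1 h2 huv q1 q2 q3
    refine ⟨Walk.cons h1 (Walk.cons h2 Walk.nil), ?_, ?_⟩
    · rw [Walk.cons_isPath_iff, Walk.cons_isPath_iff]
      simp [h1.ne, h2.ne, huv]
    · rw [Walk.IsTotalProper, totalColorSeq_cons_cons, totalColorSeq_cons_nil]
      apply properAux <;> intro i hi <;>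
        simp only [List.length_cons, List.length_nil] at hi <;>
        rcases i with _ | _ | i <;> first | omega |
          (simp only [List.getElem_cons_succ, List.getElem_cons_zero]; assumption)
  have e3 : ∀ (u x y v : Fin 4), (pathG 4)ᶜ.Adj u x → (pathG 4)ᶜ.Adj x y →
      (pathG 4)ᶜ.Adj y v → u ≠ v → u ≠ y → x ≠ v →
      cE4 s(u, x) ≠ cV4 x → cE4 s(u, x) ≠ cE4 s(x, y) → cV4 x ≠ cE4 s(x, y) →
      cV4 x ≠ cV4 y → cE4 s(x, y) ≠ cV4 y → cE4 s(x, y) ≠ cE4 s(y, v) →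
      cV4 y ≠ cE4 s(y, v) →
      ∃ p : (pathG 4)ᶜ.Walk u v, p.IsPath ∧ p.IsTotalProper cV4 cE4 := by
    intro u x y v h1 h2 h3 huv d1 d2 q1 q2 q3 q4 q5 q6 q7
    refine ⟨Walk.cons h1 (Walk.cons h2 (Walk.cons h3 Walk.nil)), ?_, ?_⟩
    · rw [Walk.cons_isPath_iff, Walk.cons_isPath_iff, Walk.cons_isPath_iff]
      simp [h1.ne, h2.ne, h3.ne, huv, d1, d2]
    · rw [Walk.IsTotalProper, totalColorSeq_cons_cons, totalColorSeq_cons_cons,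
        totalColorSeq_cons_nil]
      apply properAux <;> intro i hi <;>
        simp only [List.length_cons, List.length_nil] at hi <;>
        rcases i with _ | _ | _ | _ | i <;> first | omega |
          (simp only [List.getElem_cons_succ, List.getElem_cons_zero]; assumption)
  intro u v huv
  fin_cases u <;> fin_cases v <;> first
  | exact absurd rfl huv
  | exact e1 _ _ (by decide)
  | exact e2 _ ⟨3, by omega⟩ _ (by decide) (by decide) huv (by decide) (by decide) (by decide)
  | exact e2 _ ⟨0, by omega⟩ _ (by decide) (by decide) huv (by decide) (by decide) (by decide)
  | exact e3 _ ⟨3, by omega⟩ ⟨0, by omega⟩ _ (by decide) (by decide) (by decide) huv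
      (by decide) (by decide) (by decide) (by decide) (by decide) (by decide) (by decide)
      (by decide) (by decide)
  | exact e3 _ ⟨0, by omega⟩ ⟨3, by omega⟩ _ (by decide) (by decide) (by decide) huv
      (by decide) (by decide) (by decide) (by decide) (by decide) (by decide) (by decide)
      (by decide) (by decide)

open SimpleGraph in
theorem tpc_lower_bound_sharp :
    ∀ n : ℕ, 4 ≤ n → ∃ G : SimpleGraph (Fin n),
      G.Connected ∧ Gᶜ.Connected ∧ G.tpc = 3 ∧ Gᶜ.tpc = 3 := by
  intro n hn
  have hG := pathG_isTPC n
  have hC : ∃ (cV : Fin n → Fin 3) (cE : Sym2 (Fin n) → Fin 3),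
      (pathG n)ᶜ.IsTPCColoring cV cE := by
    rcases eq_or_lt_of_le hn with h4 | h5
    · subst h4
      exact ⟨cV4, cE4, compl4_isTPC⟩
    · exact ⟨cV2 n, cE2 n, compl_isTPC n h5⟩
  obtain ⟨cVc, cEc, hCc⟩ := hC
  have hna1 : ¬ (pathG n).Adj ⟨0, by omega⟩ ⟨2, by omega⟩ := by
    rw [pathG_adj]; simp
  have hne1 : (⟨0, by omega⟩ : Fin n) ≠ ⟨2, by omega⟩ := by
    intro h; exact absurd (congrArg Fin.val h) (by simp)
  have hna2 : ¬ (pathG n)ᶜ.Adj ⟨0, by omega⟩ ⟨1, by omega⟩ := by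
    rw [pathG_compl_adj]; simp
  have hne2 : (⟨0, by omega⟩ : Fin n) ≠ ⟨1, by omega⟩ := by
    intro h; exact absurd (congrArg Fin.val h) (by simp)
  exact ⟨pathG n, connected_of_isTPC (by omega) _ hG, connected_of_isTPC (by omega) _ hCc,
    tpc_eq_three _ hG _ _ hne1 hna1, tpc_eq_three _ hCc _ _ hne2 hna2⟩
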